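/- For every a > 0 there exists K(a) = (a²+2)·√(1 − (2/(a²+2))²) − (π/(2S(a)))², with S(a) = (2/a)∫_1^∞ du/√((u²+4/a²)(u²−1)), such that K(a)/a² → 3/4 as a → ∞. In particular, for every ε > 0 there is A such that for all a ≥ A, every positive integer k with k² < (3/4 − ε)·a² satisfies k² < K(a). -/

import Mathlib

open Real MeasureTheory Set Filter

noncomputable def heisS (a : ℝ) : ℝ :=
  (2 / a) * ∫ u in Ioi (1 : ℝ), (Real.sqrt ((u ^ 2 + 4 / a ^ 2) * (u ^ 2 - 1)))⁻¹

noncomputable def heisK (a : ℝ) : ℝ :=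
  (a ^ 2 + 2) * Real.sqrt (1 - (2 / (a ^ 2 + 2)) ^ 2) - (Real.pi / (2 * heisS a)) ^ 2

noncomputable def heisI (a : ℝ) : ℝ :=
  ∫ u in Ioi (1 : ℝ), (Real.sqrt ((u ^ 2 + 4 / a ^ 2) * (u ^ 2 - 1)))⁻¹

noncomputable def heisG (u : ℝ) : ℝ := (Real.sqrt (u ^ 2 * (u ^ 2 - 1)))⁻¹

lemma heis_hasDerivAt {u : ℝ} (hu : 1 < u) :
    HasDerivAt (fun u : ℝ => Real.arccos u⁻¹) (heisG u) u := by
  have hu0 : (0 : ℝ) < u := by linarith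
  have hinv1 : u⁻¹ < 1 := by
    rw [inv_lt_one_iff₀]; right; exact hu
  have hinv0 : 0 < u⁻¹ := by positivity
  have h1 : HasDerivAt (fun y : ℝ => y⁻¹) (-(u ^ 2)⁻¹) u := hasDerivAt_inv hu0.ne'
  have h2 := (Real.hasDerivAt_arccos (by linarith : u⁻¹ ≠ -1) hinv1.ne).comp u h1
  refine h2.congr_deriv (Eq.symm ?_)
  have hs : Real.sqrt (u ^ 2 * (u ^ 2 - 1)) = u ^ 2 * Real.sqrt (1 - (u⁻¹) ^ 2) := by
    rw [show u ^ 2 * (u ^ 2 - 1) = (u ^ 2) ^ 2 * (1 - (u⁻¹) ^ 2) by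
      field_simp]
    rw [Real.sqrt_mul (by positivity), Real.sqrt_sq (by positivity)]
  have hsq : 0 < Real.sqrt (1 - (u⁻¹) ^ 2) := by
    apply Real.sqrt_pos.mpr
    nlinarith
  rw [heisG, hs]
  field_simp

lemma heisG_integrableOn : IntegrableOn heisG (Ioi (1 : ℝ)) := by
  apply integrableOn_Ioi_deriv_of_nonneg
    (g := fun u : ℝ => Real.arccos u⁻¹) (l := π / 2)
  · exact (Real.continuous_arccos.continuousAt.comp
      (continuousAt_inv₀ one_ne_zero)).continuousWithinAt
  · exact fun x hx => heis_hasDerivAt hx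
  · intro x hx
    simp only [heisG]
    positivity
  · have : Tendsto (fun u : ℝ => Real.arccos u⁻¹) atTop (nhds (Real.arccos 0)) :=
      (Real.continuous_arccos.tendsto 0).comp tendsto_inv_atTop_zero
    simpa [Real.arccos_zero] using this

lemma heisG_integral : ∫ u in Ioi (1 : ℝ), heisG u = π / 2 := by
  have : Tendsto (fun u : ℝ => Real.arccos u⁻¹) atTop (nhds (Real.arccos 0)) :=
    (Real.continuous_arccos.tendsto 0).comp tendsto_inv_atTop_zero
  rw [integral_Ioi_of_hasDerivAt_of_tendsto
    (f := fun u : ℝ => Real.arccos u⁻¹) (m := π / 2)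
    ((Real.continuous_arccos.continuousAt.comp
      (continuousAt_inv₀ one_ne_zero)).continuousWithinAt)
    (fun x hx => heis_hasDerivAt hx) heisG_integrableOn
    (by simpa [Real.arccos_zero] using this)]
  simp [Real.arccos_one]

lemma heisI_tendsto : Tendsto heisI atTop (nhds (π / 2)) := by
  rw [show (π / 2 : ℝ) = ∫ u in Ioi (1 : ℝ), heisG u from heisG_integral.symm]
  apply tendsto_integral_filter_of_dominated_convergence heisG
  · filter_upwards with a
    apply Measurable.aestronglyMeasurable
    fun_prop
  · filter_upwards with a
    rw [ae_restrict_iff' measurableSet_Ioi]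
    filter_upwards with u hu
    have hu1 : (1 : ℝ) < u := hu
    have hpos : 0 < Real.sqrt (u ^ 2 * (u ^ 2 - 1)) := by
      exact Real.sqrt_pos.mpr (mul_pos (by positivity) (by nlinarith))
    have hle : u ^ 2 * (u ^ 2 - 1) ≤ (u ^ 2 + 4 / a ^ 2) * (u ^ 2 - 1) := by
      have h4 : (0:ℝ) ≤ 4 / a ^ 2 := div_nonneg (by norm_num) (sq_nonneg a)
      have := mul_le_mul_of_nonneg_right
        (le_add_of_nonneg_right h4 : u ^ 2 ≤ u ^ 2 + 4 / a ^ 2)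
        (by nlinarith : (0:ℝ) ≤ u ^ 2 - 1)
      linarith
    have : Real.sqrt (u ^ 2 * (u ^ 2 - 1)) ≤
        Real.sqrt ((u ^ 2 + 4 / a ^ 2) * (u ^ 2 - 1)) := Real.sqrt_le_sqrt hle
    rw [Real.norm_eq_abs, abs_of_nonneg (by positivity)]
    exact inv_anti₀ hpos this
  · exact heisG_integrableOn
  · rw [ae_restrict_iff' measurableSet_Ioi]
    filter_upwards with u hu
    have hu1 : (1 : ℝ) < u := hu
    have hpos : 0 < Real.sqrt (u ^ 2 * (u ^ 2 - 1)) := by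
      exact Real.sqrt_pos.mpr (mul_pos (by positivity) (by nlinarith))
    have h4 : Tendsto (fun a : ℝ => 4 / a ^ 2) atTop (nhds 0) :=
      Tendsto.div_atTop tendsto_const_nhds (tendsto_pow_atTop two_ne_zero)
    have h1 : Tendsto (fun a : ℝ => (u ^ 2 + 4 / a ^ 2) * (u ^ 2 - 1)) atTop
        (nhds (u ^ 2 * (u ^ 2 - 1))) := by
      have := ((tendsto_const_nhds (x := u ^ 2) (f := atTop)).add h4).mul
        (tendsto_const_nhds (x := u ^ 2 - 1))
      simpa using this
    exact (h1.sqrt).inv₀ hpos.ne'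

theorem stmt_16 :
    Tendsto (fun a : ℝ => heisK a / a ^ 2) atTop (nhds (3 / 4)) ∧
    ∀ ε : ℝ, 0 < ε → ∃ A : ℝ, ∀ a : ℝ, A ≤ a → ∀ k : ℕ, 0 < k →
      (k : ℝ) ^ 2 < (3 / 4 - ε) * a ^ 2 → (k : ℝ) ^ 2 < heisK a := by
  have hpi1 : (1 : ℝ) < π / 2 := by
    have := Real.pi_gt_three; linarith
  have hev : ∀ᶠ a : ℝ in atTop, 1 < heisI a :=
    heisI_tendsto.eventually (lt_mem_nhds hpi1)
  -- the main tendsto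
  have hmain : Tendsto (fun a : ℝ => heisK a / a ^ 2) atTop (nhds (3 / 4)) := by
    have hT : Tendsto (fun a : ℝ =>
        (1 + 2 / a ^ 2) * Real.sqrt (1 - (2 / (a ^ 2 + 2)) ^ 2)
          - π ^ 2 / (16 * (heisI a) ^ 2)) atTop (nhds (3 / 4)) := by
      have h2a : Tendsto (fun a : ℝ => 2 / a ^ 2) atTop (nhds 0) :=
        Tendsto.div_atTop tendsto_const_nhds (tendsto_pow_atTop two_ne_zero)
      have hA : Tendsto (fun a : ℝ => 1 + 2 / a ^ 2) atTop (nhds 1) := by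
        simpa using (tendsto_const_nhds (x := (1:ℝ)) (f := atTop)).add h2a
      have hB : Tendsto (fun a : ℝ => Real.sqrt (1 - (2 / (a ^ 2 + 2)) ^ 2)) atTop
          (nhds 1) := by
        have h0 : Tendsto (fun a : ℝ => 2 / (a ^ 2 + 2)) atTop (nhds 0) :=
          Tendsto.div_atTop tendsto_const_nhds
            (tendsto_atTop_add_const_right _ 2 (tendsto_pow_atTop two_ne_zero))
        have : Tendsto (fun a : ℝ => 1 - (2 / (a ^ 2 + 2)) ^ 2) atTop (nhds 1) := by
          simpa using (tendsto_const_nhds (x := (1:ℝ)) (f := atTop)).sub (h0.pow 2)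
        simpa using this.sqrt
      have hC : Tendsto (fun a : ℝ => π ^ 2 / (16 * (heisI a) ^ 2)) atTop
          (nhds (1 / 4)) := by
        have : Tendsto (fun a : ℝ => π ^ 2 / (16 * (heisI a) ^ 2)) atTop
            (nhds (π ^ 2 / (16 * (π / 2) ^ 2))) := by
          apply Tendsto.div tendsto_const_nhds ((heisI_tendsto.pow 2).const_mul 16)
          positivity
        convert this using 2
        have hπ : π ≠ 0 := Real.pi_ne_zero
        field_simp
        ring
      have h34 : (3 / 4 : ℝ) = 1 * 1 - 1 / 4 := by norm_num
      rw [h34]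
      exact (hA.mul hB).sub hC
    apply Tendsto.congr' _ hT
    filter_upwards [hev, eventually_ge_atTop (1 : ℝ)] with a hIa ha1
    have ha0 : a ≠ 0 := by linarith
    have hI0 : heisI a ≠ 0 := by linarith
    have hS : heisS a = 2 / a * heisI a := rfl
    rw [heisK, hS]
    field_simp
    ring
  refine ⟨hmain, fun ε hε => ?_⟩
  have h1 : ∀ᶠ a : ℝ in atTop, 3 / 4 - ε < heisK a / a ^ 2 :=
    hmain.eventually (lt_mem_nhds (by linarith))
  rcases (h1.and (eventually_ge_atTop (1 : ℝ))).exists_forall_of_atTop with ⟨A, hA⟩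
  refine ⟨A, fun a ha k hk hk2 => ?_⟩
  obtain ⟨hlt, ha1⟩ := hA a ha
  have ha2 : (0 : ℝ) < a ^ 2 := by positivity
  have : (3 / 4 - ε) * a ^ 2 < heisK a := (lt_div_iff₀ ha2).mp hlt
  linarith
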